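/- Let (X,T) be a simple, properly ordered Bratteli-Vershik system and let k >= 1. If x and x' are two distinct paths that are k-equivalent at infinitely many levels n > k, then x and x' have the same k-coding. -/

import Mathlib

set_option autoImplicit false

/-- An ordered Bratteli diagram: finite nonempty vertex sets `V n`, a single root
vertex at level `0`, finite edge sets `E n` (edges from level `n` to level `n+1`,
multiple edges allowed), every vertex has an outgoing edge, every non-root vertex
an incoming edge, and the edges into each vertex carry a linear order, encoded by
the relation `elt` which relates only edges with the same target. -/
structure BDiagram where
  V : ℕ → Type
  E : ℕ → Type
  fintV : ∀ n, Fintype (V n)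
  fintE : ∀ n, Fintype (E n)
  nonV : ∀ n, Nonempty (V n)
  rootSubsingleton : Subsingleton (V 0)
  src : ∀ {n}, E n → V n
  tgt : ∀ {n}, E n → V (n + 1)
  hasOut : ∀ (n : ℕ) (v : V n), ∃ e : E n, src e = v
  hasIn : ∀ (n : ℕ) (v : V (n + 1)), ∃ e : E n, tgt e = v
  elt : ∀ {n}, E n → E n → Prop
  elt_tgt : ∀ (n : ℕ) (e f : E n), elt e f → tgt e = tgt f
  elt_irrefl : ∀ (n : ℕ) (e : E n), ¬ elt e e
  elt_trans : ∀ (n : ℕ) (e f g : E n), elt e f → elt f g → elt e g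
  elt_total : ∀ (n : ℕ) (e f : E n), tgt e = tgt f → e ≠ f → elt e f ∨ elt f e

namespace BDiagram

variable (B : BDiagram)

def castV {m n : ℕ} (h : m = n) (v : B.V m) : B.V n := h ▸ v

/-- An edge is minimal if no edge (into the same target) is below it. -/
def IsMinEdge {n : ℕ} (e : B.E n) : Prop := ∀ e' : B.E n, ¬ B.elt e' e

/-- An edge is maximal if no edge (into the same target) is above it. -/
def IsMaxEdge {n : ℕ} (e : B.E n) : Prop := ∀ e' : B.E n, ¬ B.elt e e'

/-- The space of infinite paths from the root. -/
def PathSpace : Type := { x : ∀ n, B.E n // ∀ n, B.tgt (x n) = B.src (x (n + 1)) }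

def IsMinPath (x : B.PathSpace) : Prop := ∀ n, B.IsMinEdge (x.1 n)

def IsMaxPath (x : B.PathSpace) : Prop := ∀ n, B.IsMaxEdge (x.1 n)

/-- Properly ordered: unique minimal and unique maximal path. -/
def ProperlyOrdered : Prop :=
  (∃! x : B.PathSpace, B.IsMinPath x) ∧ (∃! x : B.PathSpace, B.IsMaxPath x)

/-- The partial order on cofinal paths: `x < y` iff they eventually agree and at the
last disagreement the edge of `x` is below the edge of `y`. -/
def pathLT (x y : B.PathSpace) : Prop :=
  ∃ N : ℕ, B.elt (x.1 N) (y.1 N) ∧ ∀ n : ℕ, N < n → x.1 n = y.1 n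

/-- `T` is the Vershik map: each non-maximal path goes to its successor, and each
maximal path goes to a minimal path. -/
def IsVershik (T : B.PathSpace ≃ B.PathSpace) : Prop :=
  (∀ x : B.PathSpace, ¬ B.IsMaxPath x →
    B.pathLT x (T x) ∧ ∀ z : B.PathSpace, B.pathLT x z → ¬ B.pathLT z (T x)) ∧
  (∀ x : B.PathSpace, B.IsMaxPath x → B.IsMinPath (T x))

/-- `f` is a chain of consecutive edges on levels `[a, b)`. -/
def SegOn (f : ∀ i, B.E i) (a b : ℕ) : Prop :=
  ∀ i : ℕ, a ≤ i → i + 1 < b → B.tgt (f i) = B.src (f (i + 1))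

/-- Simplicity: some telescoping has complete connections between adjacent levels. -/
def Simple : Prop :=
  ∃ ns : ℕ → ℕ, StrictMono ns ∧ ns 0 = 0 ∧
    ∀ (l c : ℕ), ns (l + 1) = c + 1 →
      ∀ (v : B.V (ns l)) (w : B.V (c + 1)),
        ∃ f : ∀ i, B.E i, B.SegOn f (ns l) (c + 1) ∧ B.src (f (ns l)) = v ∧ B.tgt (f c) = w

/-- The natural (Cantor) topology on the path space, induced from the product of
the discrete topologies on the edge sets. -/
def pathTop : TopologicalSpace B.PathSpace :=
  TopologicalSpace.induced Subtype.val (@Pi.topologicalSpace ℕ B.E (fun _ => ⊥))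

/-- Integer iterates of a bijection of the path space. -/
def iterZ (T : B.PathSpace ≃ B.PathSpace) (m : ℤ) : B.PathSpace ≃ B.PathSpace :=
  (T : Equiv.Perm B.PathSpace) ^ m

/-- Two paths have the same `k`-coding: for every time `m` the initial segments of
`T^m x` and `T^m y` from the root to level `k` coincide. -/
def SameCoding (T : B.PathSpace ≃ B.PathSpace) (k : ℕ) (x y : B.PathSpace) : Prop :=
  ∀ (m : ℤ) (i : ℕ), i < k → ((B.iterZ T m) x).1 i = ((B.iterZ T m) y).1 i

/-- A depth `k` pair: distinct paths with the same `k`-coding but not the same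
`(k+1)`-coding. -/
def DepthPair (T : B.PathSpace ≃ B.PathSpace) (k : ℕ) (x y : B.PathSpace) : Prop :=
  x ≠ y ∧ B.SameCoding T k x y ∧ ¬ B.SameCoding T (k + 1) x y

/-- The pair `x, y` has a `j` cut: for some time `m`, both `T^m x` and `T^m y` are
minimal from the root into level `j`. -/
def HasCut (T : B.PathSpace ≃ B.PathSpace) (j : ℕ) (x y : B.PathSpace) : Prop :=
  ∃ m : ℤ, (∀ i : ℕ, i < j → B.IsMinEdge (((B.iterZ T m) x).1 i)) ∧
    (∀ i : ℕ, i < j → B.IsMinEdge (((B.iterZ T m) y).1 i))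

/-- Nonexpansive: for every `k ≥ 1` there are two distinct paths with the same
`k`-coding. -/
def Nonexpansive (T : B.PathSpace ≃ B.PathSpace) : Prop :=
  ∀ k : ℕ, 1 ≤ k → ∃ x y : B.PathSpace, x ≠ y ∧ B.SameCoding T k x y

/-- Well timed: for every `k ≥ 1` and every `j > k` there is a depth `k` pair with
a `j` cut. -/
def WellTimed (T : B.PathSpace ≃ B.PathSpace) : Prop :=
  ∀ k : ℕ, 1 ≤ k → ∀ j : ℕ, k < j →
    ∃ x y : B.PathSpace, B.DepthPair T k x y ∧ B.HasCut T j x y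

/-- Very well timed: for every `k ≥ 1` there is a depth `k` pair having a `j` cut
for every `j > k`. -/
def VeryWellTimed (T : B.PathSpace ≃ B.PathSpace) : Prop :=
  ∀ k : ℕ, 1 ≤ k →
    ∃ x y : B.PathSpace, B.DepthPair T k x y ∧ ∀ j : ℕ, k < j → B.HasCut T j x y

/-- Weakly well timed: for infinitely many `k ≥ 1`, for every `j > k` there is a
depth `k` pair with a `j` cut. -/
def WeaklyWellTimed (T : B.PathSpace ≃ B.PathSpace) : Prop :=
  ∀ K : ℕ, ∃ k : ℕ, K ≤ k ∧ 1 ≤ k ∧ ∀ j : ℕ, k < j →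
    ∃ x y : B.PathSpace, B.DepthPair T k x y ∧ B.HasCut T j x y

/-- Untimed: for every `k ≥ 1` there is a `j > k` such that no depth `k` pair has a
`j` cut. -/
def Untimed (T : B.PathSpace ≃ B.PathSpace) : Prop :=
  ∀ k : ℕ, 1 ≤ k → ∃ j : ℕ, k < j ∧
    ∀ x y : B.PathSpace, B.DepthPair T k x y → ¬ B.HasCut T j x y

/-- Very untimed: for every `k ≥ 1`, no depth `k` pair has a `(k+1)` cut. -/
def VeryUntimed (T : B.PathSpace ≃ B.PathSpace) : Prop :=
  ∀ k : ℕ, 1 ≤ k →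
    ∀ x y : B.PathSpace, B.DepthPair T k x y → ¬ B.HasCut T (k + 1) x y

/-- Finite paths from the root to level `n`. -/
def FinPath (n : ℕ) : Type :=
  { f : (i : Fin n) → B.E i.val //
    ∀ (i : ℕ) (h : i + 1 < n), B.tgt (f ⟨i, by omega⟩) = B.src (f ⟨i + 1, h⟩) }

/-- The lexicographic (from the end) order on finite paths to level `n` induced by
the orders on the edges. -/
def finLT {n : ℕ} (p q : B.FinPath n) : Prop :=
  ∃ (N : ℕ) (h : N < n), B.elt (p.1 ⟨N, h⟩) (q.1 ⟨N, h⟩) ∧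
    ∀ (i : ℕ) (hi : i < n), N < i → p.1 ⟨i, hi⟩ = q.1 ⟨i, hi⟩

/-- The finite path `p` to level `n` ends at the vertex `v`. -/
def EndsAt {n : ℕ} (p : B.FinPath n) (v : B.V n) : Prop :=
  ∀ (m : ℕ) (h : n = m + 1), B.tgt (p.1 ⟨m, by omega⟩) = B.castV h v

/-- The initial segment of an infinite path, from the root to level `n`. -/
def pathInit (x : B.PathSpace) (n : ℕ) : B.FinPath n :=
  ⟨fun i => x.1 i.val, fun i _ => x.2 i⟩

/-- The vertex of an infinite path at level `n`. -/
def pathVert (x : B.PathSpace) (n : ℕ) : B.V n := B.src (x.1 n)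

theorem pathInit_endsAt (x : B.PathSpace) (n : ℕ) :
    B.EndsAt (B.pathInit x n) (B.pathVert x n) := by
  intro m h
  subst h
  exact x.2 m

/-- Truncation of a finite path to a lower level. -/
def truncTo {n : ℕ} (k : ℕ) (hk : k ≤ n) (p : B.FinPath n) : B.FinPath k :=
  ⟨fun i => p.1 ⟨i.val, by omega⟩, fun i h => p.2 i (by omega)⟩

/-- Paths `x, x'` are `k`-equivalent at level `n`: there is an order isomorphism
between the sets of finite paths from the root into their level-`n` vertices which
preserves truncations to level `k` (equality of `k`-basic blocks) and which matches
the initial segment of `x` with the initial segment of `x'` (the "dot" is in the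
same place). -/
def KEquivAt (k n : ℕ) (x x' : B.PathSpace) : Prop :=
  ∃ φ : { p : B.FinPath n // B.EndsAt p (B.pathVert x n) } ≃
      { p : B.FinPath n // B.EndsAt p (B.pathVert x' n) },
    (∀ p q, B.finLT p.1 q.1 ↔ B.finLT (φ p).1 (φ q).1) ∧
    (∀ p (i : ℕ) (hik : i < k) (hin : i < n), ((φ p).1).1 ⟨i, hin⟩ = (p.1).1 ⟨i, hin⟩) ∧
    φ ⟨B.pathInit x n, B.pathInit_endsAt x n⟩ = ⟨B.pathInit x' n, B.pathInit_endsAt x' n⟩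

/-- Paths are `k`-equivalent: they agree from the root to level `k` and are
`k`-equivalent at every level `n > k`. -/
def KEquivPaths (k : ℕ) (x x' : B.PathSpace) : Prop :=
  (∀ i : ℕ, i < k → x.1 i = x'.1 i) ∧ ∀ n : ℕ, k < n → B.KEquivAt k n x x'

/-- Standard nonexpansive: for every `k ≥ 1` there is a pair of distinct
`k`-equivalent paths. -/
def SNE : Prop := ∀ k : ℕ, 1 ≤ k → ∃ x x' : B.PathSpace, x ≠ x' ∧ B.KEquivPaths k x x'

/-!  ### Telescoping  -/

theorem castV_eq_of_heq {m n : ℕ} (h : m = n) {v : B.V m} {w : B.V n} (hw : HEq v w) :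
    B.castV h v = w := by
  subst h
  exact eq_of_heq hw

theorem castV_heq {m n : ℕ} (h : m = n) (v : B.V m) : HEq (B.castV h v) v := by
  subst h
  rfl

theorem castV_inj {m n : ℕ} (h : m = n) {v w : B.V m}
    (hvw : B.castV h v = B.castV h w) : v = w := by
  subst h
  exact hvw

def castE {m n : ℕ} (h : m = n) (e : B.E m) : B.E n := h ▸ e

noncomputable def chainFrom (a : ℕ) (v : B.V a) : (i : ℕ) → B.E (a + i)
  | 0 => (B.hasOut a v).choose
  | i + 1 => (B.hasOut (a + i + 1) (B.tgt (chainFrom a v i))).choose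

theorem chainFrom_src_zero (a : ℕ) (v : B.V a) : B.src (B.chainFrom a v 0) = v :=
  (B.hasOut a v).choose_spec

theorem chainFrom_src_succ (a : ℕ) (v : B.V a) (i : ℕ) :
    B.src (B.chainFrom a v (i + 1)) = B.tgt (B.chainFrom a v i) :=
  (B.hasOut (a + i + 1) (B.tgt (B.chainFrom a v i))).choose_spec

noncomputable def chainTo (a : ℕ) : (j : ℕ) → (w : B.V (a + j + 1)) → (i : ℕ) → i ≤ j → B.E (a + i)
  | 0, w, i, _ => B.castE (by omega : a + 0 = a + i) (B.hasIn a w).choose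
  | j + 1, w, i, _ =>
      if h : i ≤ j then chainTo a j (B.src (B.hasIn (a + j + 1) w).choose) i h
      else B.castE (by omega : a + (j + 1) = a + i) (B.hasIn (a + j + 1) w).choose

theorem chainTo_tgt_last (a : ℕ) : ∀ (j : ℕ) (w : B.V (a + j + 1)),
    B.tgt (B.chainTo a j w j le_rfl) = w := by
  intro j w
  cases j with
  | zero =>
      simp only [chainTo]
      exact (B.hasIn a w).choose_spec
  | succ j =>
      simp only [chainTo]
      rw [dif_neg (by omega : ¬ j + 1 ≤ j)]
      exact (B.hasIn (a + j + 1) w).choose_spec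

theorem chainTo_chain (a : ℕ) : ∀ (j : ℕ) (w : B.V (a + j + 1)) (i : ℕ) (h : i + 1 ≤ j)
    (h' : i ≤ j), B.tgt (B.chainTo a j w i h') = B.src (B.chainTo a j w (i + 1) h) := by
  intro j
  induction j with
  | zero => intro w i h h'; omega
  | succ j ih =>
      intro w i h h'
      by_cases hij : i + 1 ≤ j
      · simp only [chainTo]
        rw [dif_pos (by omega : i ≤ j), dif_pos hij]
        exact ih _ i hij (by omega)
      · have hi : i = j := by omega
        subst hi
        simp only [chainTo]
        rw [dif_pos (le_refl i), dif_neg (by omega : ¬ i + 1 ≤ i)]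
        exact B.chainTo_tgt_last a i _


def TelE (a b : ℕ) : Type :=
  { f : (i : Fin (b - a)) → B.E (a + i.val) //
    ∀ (i : ℕ) (h : i + 1 < b - a), B.tgt (f ⟨i, by omega⟩) = B.src (f ⟨i + 1, h⟩) }

def telSrc {a b : ℕ} (hab : a < b) (f : B.TelE a b) : B.V a :=
  B.src (f.1 ⟨0, by omega⟩)

def telTgt {a b : ℕ} (hab : a < b) (f : B.TelE a b) : B.V b :=
  B.castV (by omega : a + (b - a - 1) + 1 = b) (B.tgt (f.1 ⟨b - a - 1, by omega⟩))

def telLT {a b : ℕ} (f g : B.TelE a b) : Prop :=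
  ∃ (N : ℕ) (h : N < b - a), B.elt (f.1 ⟨N, h⟩) (g.1 ⟨N, h⟩) ∧
    ∀ (i : ℕ) (hi : i < b - a), N < i → f.1 ⟨i, hi⟩ = g.1 ⟨i, hi⟩

noncomputable def Telescope (ns : ℕ → ℕ) (hmono : StrictMono ns) (h0 : ns 0 = 0) : BDiagram where
  V l := B.V (ns l)
  E l := B.TelE (ns l) (ns (l + 1))
  fintV l := B.fintV (ns l)
  fintE l := by
    classical
    letI : ∀ i : Fin (ns (l + 1) - ns l), Fintype (B.E (ns l + i.val)) := fun i => B.fintE _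
    exact Subtype.fintype _
  nonV l := B.nonV (ns l)
  rootSubsingleton := by show Subsingleton (B.V (ns 0)); rw [h0]; exact B.rootSubsingleton
  src {l} f := B.telSrc (hmono (Nat.lt_succ_self l)) f
  tgt {l} f := B.telTgt (hmono (Nat.lt_succ_self l)) f
  hasOut := by
    intro l v
    refine ⟨⟨fun i => B.chainFrom (ns l) v i.val,
      fun i h => (B.chainFrom_src_succ (ns l) v i).symm⟩, ?_⟩
    exact B.chainFrom_src_zero (ns l) v
  hasIn := by
    intro l w
    have hab : ns l < ns (l + 1) := hmono (Nat.lt_succ_self l)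
    have hj : ns l + (ns (l + 1) - ns l - 1) + 1 = ns (l + 1) := by omega
    refine ⟨⟨fun i => B.chainTo (ns l) (ns (l + 1) - ns l - 1) (B.castV hj.symm w) i.val
        (by omega), fun i h => B.chainTo_chain _ _ _ i (by omega) (by omega)⟩, ?_⟩
    show B.castV (by omega) (B.tgt (B.chainTo (ns l) (ns (l + 1) - ns l - 1)
      (B.castV hj.symm w) (ns (l + 1) - ns l - 1) (by omega))) = w
    rw [B.chainTo_tgt_last]
    exact B.castV_eq_of_heq _ (B.castV_heq _ w)
  elt {l} f g := B.telLT f g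
  elt_tgt := by
    rintro l f g ⟨N, hN, hlt, hgt⟩
    show B.telTgt _ f = B.telTgt _ g
    unfold telTgt
    refine congrArg (B.castV _) ?_
    rcases eq_or_lt_of_le (show N ≤ ns (l + 1) - ns l - 1 by omega) with h | h
    · subst h
      exact B.elt_tgt _ _ _ hlt
    · exact congrArg B.tgt (hgt _ (by omega) h)
  elt_irrefl := by
    rintro l f ⟨N, h, hlt, -⟩
    exact B.elt_irrefl _ _ hlt
  elt_trans := by
    rintro l f g h ⟨N₁, hN₁, hlt₁, hgt₁⟩ ⟨N₂, hN₂, hlt₂, hgt₂⟩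
    rcases lt_trichotomy N₁ N₂ with hc | hc | hc
    · exact ⟨N₂, hN₂, by rw [hgt₁ N₂ hN₂ hc]; exact hlt₂,
        fun i hi hN => (hgt₁ i hi (by omega)).trans (hgt₂ i hi hN)⟩
    · subst hc
      exact ⟨N₁, hN₁, B.elt_trans _ _ _ _ hlt₁ hlt₂,
        fun i hi hN => (hgt₁ i hi hN).trans (hgt₂ i hi hN)⟩
    · refine ⟨N₁, hN₁, ?_, fun i hi hN => (hgt₁ i hi hN).trans (hgt₂ i hi (by omega))⟩
      rw [← hgt₂ N₁ hN₁ hc]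
      exact hlt₁
  elt_total := by
    intro l f g htgt hne
    classical
    have hab : ns l < ns (l + 1) := hmono (Nat.lt_succ_self l)
    set b := ns (l + 1) - ns l with hb
    have hex : ∃ N, ∃ h : N < b, f.1 ⟨N, h⟩ ≠ g.1 ⟨N, h⟩ := by
      by_contra hco
      push_neg at hco
      exact hne (Subtype.ext (funext fun i => hco i.val i.isLt))
    set P : ℕ → Prop := fun N => ∃ h : N < b, f.1 ⟨N, h⟩ ≠ g.1 ⟨N, h⟩ with hP
    obtain ⟨N₀, hN₀⟩ := hex
    set N := Nat.findGreatest P b with hNdef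
    have hPN : P N := Nat.findGreatest_spec (le_of_lt hN₀.choose) hN₀
    have hafter : ∀ i (hi : i < b), N < i → f.1 ⟨i, hi⟩ = g.1 ⟨i, hi⟩ := by
      intro i hi hNi
      by_contra hcon
      exact Nat.findGreatest_is_greatest hNi (le_of_lt hi) ⟨hi, hcon⟩
    clear_value N
    obtain ⟨hNb, hNne⟩ := hPN
    have htgtN : B.tgt (f.1 ⟨N, hNb⟩) = B.tgt (g.1 ⟨N, hNb⟩) := by
      rcases eq_or_lt_of_le (show N ≤ b - 1 by omega) with h | h
      · -- N is the last index; use equality of targets of the composite edges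
        subst h
        exact B.castV_inj _ htgt
      · have h2 : f.1 ⟨N + 1, by omega⟩ = g.1 ⟨N + 1, by omega⟩ :=
          hafter (N + 1) (by omega) (by omega)
        rw [f.2 N (by omega), g.2 N (by omega), h2]
    rcases B.elt_total _ _ _ htgtN hNne with h | h
    · exact Or.inl ⟨N, hNb, h, hafter⟩
    · exact Or.inr ⟨N, hNb, h, fun i hi hN => (hafter i hi hN).symm⟩

def teleMap (ns : ℕ → ℕ) (hmono : StrictMono ns) (h0 : ns 0 = 0) (x : B.PathSpace) :
    (B.Telescope ns hmono h0).PathSpace :=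
  ⟨fun l => ⟨fun i => x.1 (ns l + i.val), fun i _ => x.2 (ns l + i)⟩, fun l => by
    have hab : ns l < ns (l + 1) := hmono (Nat.lt_succ_self l)
    have hm : ns l + (ns (l + 1) - ns l - 1) + 1 = ns (l + 1) := by omega
    show B.castV _ (B.tgt (x.1 (ns l + (ns (l + 1) - ns l - 1)))) = B.src (x.1 (ns (l + 1) + 0))
    rw [x.2 (ns l + (ns (l + 1) - ns l - 1))]
    exact B.castV_eq_of_heq _ (by rw [hm]; exact HEq.rfl)⟩


/-- Level `n+1` is uniformly ordered: there is a single nonempty block `P` of paths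
from the root to level `n` such that the `n`-basic block at every vertex at level
`n+1` is a positive power of `P`. -/
def UniformlyOrderedLevel (n : ℕ) : Prop :=
  ∃ (p : ℕ) (hp : 0 < p) (P : Fin p → B.FinPath n),
    ∀ v : B.V (n + 1), ∃ (m : ℕ), 0 < m ∧
      ∃ enum : Fin (m * p) ≃ { q : B.FinPath (n + 1) // B.EndsAt q v },
        (∀ i j : Fin (m * p), i < j ↔ B.finLT (enum i).1 (enum j).1) ∧
        (∀ i : Fin (m * p),
          B.truncTo n (Nat.le_succ n) (enum i).1 = P ⟨i.val % p, Nat.mod_lt _ hp⟩)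

/-- The ordinal label of an edge: its position in the linear order on the edges
into its target. -/
noncomputable def edgeLabel {n : ℕ} (e : B.E n) : ℕ := Nat.card { e' : B.E n // B.elt e' e }

/-- Deterministic: for every `n ≥ 1`, distinct edges with the same source at level
`n` have different ordinal labels. -/
def Deterministic : Prop :=
  ∀ n : ℕ, 1 ≤ n → ∀ e f : B.E n, B.src e = B.src f → e ≠ f →
    B.edgeLabel e ≠ B.edgeLabel f

end BDiagram

/-- A Bratteli–Vershik system: a simple, properly ordered ordered Bratteli diagram
together with its Vershik map. -/
structure BVSystem where
  B : BDiagram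
  T : B.PathSpace ≃ B.PathSpace
  proper : B.ProperlyOrdered
  simple : B.Simple
  vershik : B.IsVershik T

/-- Conjugacy of systems: an equivariant homeomorphism of the path spaces taking
minimal paths to minimal paths. -/
def Conjugate (S S' : BVSystem) : Prop :=
  ∃ φ : S.B.PathSpace ≃ S'.B.PathSpace,
    (@Continuous _ _ S.B.pathTop S'.B.pathTop φ) ∧
    (@Continuous _ _ S'.B.pathTop S.B.pathTop φ.symm) ∧
    (∀ x, φ (S.T x) = S'.T (φ x)) ∧
    (∀ x, S.B.IsMinPath x → S'.B.IsMinPath (φ x))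

/-- An odometer: a system whose diagram has exactly one vertex at every level. -/
def IsOdometer (S : BVSystem) : Prop := ∀ n, Subsingleton (S.B.V n)

/-!  ### Auxiliary development for Statement 0  -/

lemma pigeonhole_infinite {S : Set ℕ} (hS : S.Infinite) (f : ℕ → ℕ) (j : ℕ)
    (hf : ∀ n ∈ S, f n < j) : ∃ b, {n | n ∈ S ∧ f n = b}.Infinite := by
  by_contra hcon
  push_neg at hcon
  have hsub : S ⊆ ⋃ b ∈ Finset.range j, {n | n ∈ S ∧ f n = b} := by
    intro n hn
    simp only [Set.mem_iUnion]
    exact ⟨f n, by simpa using hf n hn, hn, rfl⟩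
  exact hS ((Set.Finite.biUnion (Finset.range j).finite_toSet (fun b _ => hcon b)).subset hsub)

lemma finStrictMono_le {N N' : ℕ} (f : Fin N → Fin N') (hf : ∀ s t, s < t → f s < f t) :
    ∀ s : Fin N, s.val ≤ (f s).val := by
  have key : ∀ (c : ℕ) (s : Fin N), s.val = c → c ≤ (f s).val := by
    intro c
    induction c with
    | zero => intro s _; exact Nat.zero_le _
    | succ d ih =>
        intro s hs
        have hd : d < N := by omega
        have h1 := hf ⟨d, hd⟩ s (by simp only [Fin.lt_def]; omega)
        have h2 := ih ⟨d, hd⟩ rfl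
        simp only [Fin.lt_def] at h1
        omega
  exact fun s => key s.val s rfl

lemma finEquiv_val {N N' : ℕ} (τ : Fin N ≃ Fin N')
    (h : ∀ s t : Fin N, s < t ↔ τ s < τ t) :
    N' = N ∧ ∀ s : Fin N, (τ s).val = s.val := by
  have hcard : N' = N := by
    have := Fintype.card_congr τ
    simpa using this.symm
  refine ⟨hcard, fun s => ?_⟩
  have a1 := finStrictMono_le (fun t => τ t) (fun s t hst => (h s t).1 hst) s
  have h' : ∀ s t : Fin N', s < t → τ.symm s < τ.symm t := by
    intro s t hst
    have := h (τ.symm s) (τ.symm t)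
    simp only [Equiv.apply_symm_apply] at this
    exact this.2 hst
  have a2 := finStrictMono_le (fun t => τ.symm t) h' (τ s)
  simp only [Equiv.symm_apply_apply] at a2
  omega

namespace BDiagram

variable (B : BDiagram)

lemma finLT_irrefl' {n : ℕ} (p : B.FinPath n) : ¬ B.finLT p p := by
  rintro ⟨N, h, hlt, -⟩
  exact B.elt_irrefl _ _ hlt

lemma finLT_total' {n : ℕ} {v : B.V n} (p q : B.FinPath n)
    (hp : B.EndsAt p v) (hq : B.EndsAt q v) (hne : p ≠ q) :
    B.finLT p q ∨ B.finLT q p := by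
  classical
  have hex : ∃ N, ∃ h : N < n, p.1 ⟨N, h⟩ ≠ q.1 ⟨N, h⟩ := by
    by_contra hco
    push_neg at hco
    exact hne (Subtype.ext (funext fun i => hco i.val i.isLt))
  set P : ℕ → Prop := fun N => ∃ h : N < n, p.1 ⟨N, h⟩ ≠ q.1 ⟨N, h⟩ with hP
  obtain ⟨N₀, hN₀⟩ := hex
  set N := Nat.findGreatest P n with hNdef
  have hPN : P N := Nat.findGreatest_spec (le_of_lt hN₀.choose) hN₀
  have hafter : ∀ i (hi : i < n), N < i → p.1 ⟨i, hi⟩ = q.1 ⟨i, hi⟩ := by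
    intro i hi hNi
    by_contra hcon
    exact Nat.findGreatest_is_greatest hNi (le_of_lt hi) ⟨hi, hcon⟩
  clear_value N
  obtain ⟨hNn, hNne⟩ := hPN
  have htgtN : B.tgt (p.1 ⟨N, hNn⟩) = B.tgt (q.1 ⟨N, hNn⟩) := by
    rcases Nat.lt_or_ge (N + 1) n with h | h
    · rw [p.2 N h, q.2 N h, hafter (N + 1) h (by omega)]
    · have hn1 : n = N + 1 := by omega
      exact (hp N hn1).trans (hq N hn1).symm
  rcases B.elt_total _ _ _ htgtN hNne with h | h
  · exact Or.inl ⟨N, hNn, h, hafter⟩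
  · exact Or.inr ⟨N, hNn, h, fun i hi hN' => (hafter i hi hN').symm⟩

lemma finLT_trans' {n : ℕ} (p q r : B.FinPath n) :
    B.finLT p q → B.finLT q r → B.finLT p r := by
  rintro ⟨N₁, hN₁, hlt₁, hgt₁⟩ ⟨N₂, hN₂, hlt₂, hgt₂⟩
  rcases lt_trichotomy N₁ N₂ with hc | hc | hc
  · exact ⟨N₂, hN₂, by rw [hgt₁ N₂ hN₂ hc]; exact hlt₂,
      fun i hi hN => (hgt₁ i hi (by omega)).trans (hgt₂ i hi hN)⟩
  · subst hc
    exact ⟨N₁, hN₁, B.elt_trans _ _ _ _ hlt₁ hlt₂,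
      fun i hi hN => (hgt₁ i hi hN).trans (hgt₂ i hi hN)⟩
  · refine ⟨N₁, hN₁, ?_, fun i hi hN => (hgt₁ i hi hN).trans (hgt₂ i hi (by omega))⟩
    rw [← hgt₂ N₁ hN₁ hc]
    exact hlt₁

lemma pathLT_total' (x y : B.PathSpace) (M : ℕ)
    (hag : ∀ i, M < i → x.1 i = y.1 i) (hne : x ≠ y) :
    B.pathLT x y ∨ B.pathLT y x := by
  classical
  have hex : ∃ N, x.1 N ≠ y.1 N := by
    by_contra hco
    push_neg at hco
    exact hne (Subtype.ext (funext hco))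
  set P : ℕ → Prop := fun N => x.1 N ≠ y.1 N with hP
  obtain ⟨N₀, hN₀⟩ := hex
  have hN₀le : N₀ ≤ M := by
    by_contra hc
    exact hN₀ (hag N₀ (by omega))
  set N := Nat.findGreatest P M with hNdef
  have hPN : P N := Nat.findGreatest_spec hN₀le hN₀
  have hafter : ∀ i, N < i → x.1 i = y.1 i := by
    intro i hNi
    by_cases hiM : i ≤ M
    · by_contra hcon
      exact Nat.findGreatest_is_greatest hNi hiM hcon
    · exact hag i (by omega)
  clear_value N
  have htgtN : B.tgt (x.1 N) = B.tgt (y.1 N) := by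
    rw [x.2 N, y.2 N, hafter (N + 1) (by omega)]
  rcases B.elt_total _ _ _ htgtN hPN with h | h
  · exact Or.inl ⟨N, h, hafter⟩
  · exact Or.inr ⟨N, h, fun i hi => (hafter i hi).symm⟩

/-- Concatenate a finite path ending at the level-`n` vertex of `x` with the tail of `x`. -/
def concat (x : B.PathSpace) (n : ℕ) (p : B.FinPath n)
    (hp : B.EndsAt p (B.pathVert x n)) : B.PathSpace :=
  ⟨fun i => if h : i < n then p.1 ⟨i, h⟩ else x.1 i, by
    intro i
    dsimp only
    by_cases h1 : i + 1 < n
    · rw [dif_pos (show i < n by omega), dif_pos h1]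
      exact p.2 i h1
    · by_cases h2 : i < n
      · have hn : n = i + 1 := by omega
        rw [dif_pos h2, dif_neg h1]
        subst hn
        exact hp i rfl
      · rw [dif_neg h2, dif_neg h1]
        exact x.2 i⟩

lemma concat_apply_lt (x : B.PathSpace) (n : ℕ) (p : B.FinPath n)
    (hp : B.EndsAt p (B.pathVert x n)) {i : ℕ} (h : i < n) :
    (B.concat x n p hp).1 i = p.1 ⟨i, h⟩ := dif_pos h

lemma concat_apply_ge (x : B.PathSpace) (n : ℕ) (p : B.FinPath n)
    (hp : B.EndsAt p (B.pathVert x n)) {i : ℕ} (h : ¬ i < n) :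
    (B.concat x n p hp).1 i = x.1 i := dif_neg h

lemma concat_pathInit (x : B.PathSpace) (n : ℕ) :
    B.concat x n (B.pathInit x n) (B.pathInit_endsAt x n) = x := by
  apply Subtype.ext
  funext i
  by_cases h : i < n
  · exact dif_pos h
  · exact dif_neg h

lemma pathInit_concat (x : B.PathSpace) (n : ℕ) (p : B.FinPath n)
    (hp : B.EndsAt p (B.pathVert x n)) :
    B.pathInit (B.concat x n p hp) n = p := by
  apply Subtype.ext
  funext i
  exact dif_pos i.isLt

lemma pathVert_concat (x : B.PathSpace) (n : ℕ) (p : B.FinPath n)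
    (hp : B.EndsAt p (B.pathVert x n)) :
    B.pathVert (B.concat x n p hp) n = B.pathVert x n :=
  congrArg B.src (B.concat_apply_ge x n p hp (lt_irrefl n))

/-- The Vershik successor step: if `q` is the immediate `finLT`-successor of `p`
among finite paths into the level-`n` vertex of `x`, then `T` maps `p + tail of x`
to `q + tail of x`. -/
lemma succStep (T : B.PathSpace ≃ B.PathSpace) (hT : B.IsVershik T)
    (x : B.PathSpace) (n : ℕ) (p q : B.FinPath n)
    (hp : B.EndsAt p (B.pathVert x n)) (hq : B.EndsAt q (B.pathVert x n))
    (hpq : B.finLT p q)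
    (hmid : ∀ r, B.EndsAt r (B.pathVert x n) → B.finLT p r → B.finLT r q → False) :
    T (B.concat x n p hp) = B.concat x n q hq := by
  classical
  set xp := B.concat x n p hp with hxp
  set xq := B.concat x n q hq with hxq
  obtain ⟨N, hNn, helt, hagf⟩ := hpq
  have hagnn : ∀ i, ¬ i < n → xp.1 i = xq.1 i := by
    intro i hi
    rw [hxp, hxq, B.concat_apply_ge x n p hp hi, B.concat_apply_ge x n q hq hi]
  have hagree : ∀ i, N < i → xp.1 i = xq.1 i := by
    intro i hi
    by_cases h : i < n
    · rw [hxp, hxq, B.concat_apply_lt x n p hp h, B.concat_apply_lt x n q hq h]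
      exact hagf i h hi
    · exact hagnn i h
  have hxpN : xp.1 N = p.1 ⟨N, hNn⟩ := B.concat_apply_lt x n p hp hNn
  have hxqN : xq.1 N = q.1 ⟨N, hNn⟩ := B.concat_apply_lt x n q hq hNn
  have hmax : ¬ B.IsMaxPath xp := by
    intro hmaxp
    exact hmaxp N (xq.1 N) (by rw [hxpN, hxqN]; exact helt)
  obtain ⟨hlt1, hmin1⟩ := hT.1 xp hmax
  have hpq' : B.pathLT xp xq := ⟨N, by rw [hxpN, hxqN]; exact helt, hagree⟩
  have hnot : ¬ B.pathLT xq (T xp) := hmin1 xq hpq'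
  by_contra hneq
  obtain ⟨N₁, helt₁, hag₁⟩ := hlt1
  have hag2 : ∀ i, max N N₁ < i → (T xp).1 i = xq.1 i := by
    intro i hi
    exact (hag₁ i (by omega)).symm.trans (hagree i (by omega))
  rcases B.pathLT_total' (T xp) xq (max N N₁) hag2 hneq with hlt2 | hlt2
  swap
  · exact hnot hlt2
  obtain ⟨M, heltM, hagM⟩ := hlt2
  have hN₁n : N₁ < n := by
    by_contra hc
    push_neg at hc
    have hTne : (T xp).1 N₁ ≠ xp.1 N₁ := by
      intro he
      exact B.elt_irrefl _ _ (he ▸ helt₁)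
    have hMN₁ : M = N₁ := by
      rcases lt_trichotomy M N₁ with h | h | h
      · exact absurd ((hagM N₁ h).trans (hagnn N₁ (by omega)).symm) hTne
      · exact h
      · have h1 : (T xp).1 M = xp.1 M := (hag₁ M (by omega)).symm
        have h2 : xq.1 M = xp.1 M := (hagnn M (by omega)).symm
        rw [h1, h2] at heltM
        exact absurd heltM (B.elt_irrefl _ _)
    subst hMN₁
    have h2 : xq.1 M = xp.1 M := (hagnn M (by omega)).symm
    rw [h2] at heltM
    exact B.elt_irrefl _ _ (B.elt_trans _ _ _ _ helt₁ heltM)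
  have hMn : M < n := by
    by_contra hc
    push_neg at hc
    have h1 : (T xp).1 M = xp.1 M := (hag₁ M (by omega)).symm
    have h2 : xq.1 M = xp.1 M := (hagnn M (by omega)).symm
    rw [h1, h2] at heltM
    exact absurd heltM (B.elt_irrefl _ _)
  have hvert : B.pathVert (T xp) n = B.pathVert x n := by
    unfold pathVert
    rw [← hag₁ n (by omega), hxp, B.concat_apply_ge x n p hp (lt_irrefl n)]
  have hfinpr : B.finLT p (B.pathInit (T xp) n) := by
    refine ⟨N₁, hN₁n, ?_, ?_⟩
    · show B.elt (p.1 ⟨N₁, hN₁n⟩) ((T xp).1 N₁)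
      have e1 : xp.1 N₁ = p.1 ⟨N₁, hN₁n⟩ := by
        rw [hxp]; exact B.concat_apply_lt x n p hp hN₁n
      rw [← e1]
      exact helt₁
    · intro i hi hNi
      show p.1 ⟨i, hi⟩ = (T xp).1 i
      rw [← hag₁ i hNi, hxp, B.concat_apply_lt x n p hp hi]
  have hfinrq : B.finLT (B.pathInit (T xp) n) q := by
    refine ⟨M, hMn, ?_, ?_⟩
    · show B.elt ((T xp).1 M) (q.1 ⟨M, hMn⟩)
      have e2 : xq.1 M = q.1 ⟨M, hMn⟩ := by
        rw [hxq]; exact B.concat_apply_lt x n q hq hMn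
      rw [← e2]
      exact heltM
    · intro i hi hMi
      show (T xp).1 i = q.1 ⟨i, hi⟩
      rw [hagM i hMi, hxq, B.concat_apply_lt x n q hq hi]
  exact hmid (B.pathInit (T xp) n) (hvert ▸ B.pathInit_endsAt (T xp) n) hfinpr hfinrq

/-- A linear enumeration of the finite paths into the level-`n` vertex of `x`. -/
noncomputable def enumData (x : B.PathSpace) (n : ℕ) :
    Σ N : ℕ, { e : Fin N ≃ { p : B.FinPath n // B.EndsAt p (B.pathVert x n) } //
      ∀ s t : Fin N, s < t ↔ B.finLT (e s).1 (e t).1 } := by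
  classical
  letI : ∀ i : Fin n, Fintype (B.E i.val) := fun i => B.fintE i.val
  haveI hfin1 : Finite (B.FinPath n) := Subtype.finite
  haveI hfin : Finite { p : B.FinPath n // B.EndsAt p (B.pathVert x n) } := Subtype.finite
  letI : Fintype { p : B.FinPath n // B.EndsAt p (B.pathVert x n) } := Fintype.ofFinite _
  letI r : { p : B.FinPath n // B.EndsAt p (B.pathVert x n) } →
      { p : B.FinPath n // B.EndsAt p (B.pathVert x n) } → Prop :=
    fun p q => B.finLT p.1 q.1
  haveI hsto : IsStrictTotalOrder _ r :=
    { trichotomous := by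
        intro a b hnab hnba
        by_contra hab
        rcases B.finLT_total' a.1 b.1 a.2 b.2 (fun h => hab (Subtype.ext h)) with h | h
        · exact hnab h
        · exact hnba h
      irrefl := fun a => B.finLT_irrefl' a.1
      trans := fun a b c => B.finLT_trans' a.1 b.1 c.1 }
  letI : DecidableRel r := fun a b => Classical.dec _
  letI lo : LinearOrder _ := linearOrderOfSTO r
  let eo := monoEquivOfFin { p : B.FinPath n // B.EndsAt p (B.pathVert x n) } rfl
  refine ⟨_, eo.toEquiv, fun s t => ⟨fun hst => ?_, fun hst => ?_⟩⟩
  · exact eo.lt_iff_lt.mpr hst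
  · exact eo.lt_iff_lt.mp hst

noncomputable def Nf (x : B.PathSpace) (n : ℕ) : ℕ := (B.enumData x n).1

noncomputable def ef (x : B.PathSpace) (n : ℕ) :
    Fin (B.Nf x n) ≃ { p : B.FinPath n // B.EndsAt p (B.pathVert x n) } :=
  (B.enumData x n).2.1

lemma hef (x : B.PathSpace) (n : ℕ) :
    ∀ s t : Fin (B.Nf x n), s < t ↔ B.finLT ((B.ef x n) s).1 ((B.ef x n) t).1 :=
  (B.enumData x n).2.2

noncomputable def s0 (x : B.PathSpace) (n : ℕ) : Fin (B.Nf x n) :=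
  (B.ef x n).symm ⟨B.pathInit x n, B.pathInit_endsAt x n⟩

/-- Concatenation taking the subtype element directly. -/
def concatS (x : B.PathSpace) (n : ℕ)
    (P : { p : B.FinPath n // B.EndsAt p (B.pathVert x n) }) : B.PathSpace :=
  B.concat x n P.1 P.2

lemma concatS_apply_lt (x : B.PathSpace) (n : ℕ)
    (P : { p : B.FinPath n // B.EndsAt p (B.pathVert x n) }) {i : ℕ} (h : i < n) :
    (B.concatS x n P).1 i = P.1.1 ⟨i, h⟩ := B.concat_apply_lt x n P.1 P.2 h

lemma pathInit_concatS (x : B.PathSpace) (n : ℕ)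
    (P : { p : B.FinPath n // B.EndsAt p (B.pathVert x n) }) :
    B.pathInit (B.concatS x n P) n = P.1 := B.pathInit_concat x n P.1 P.2

lemma pathVert_concatS (x : B.PathSpace) (n : ℕ)
    (P : { p : B.FinPath n // B.EndsAt p (B.pathVert x n) }) :
    B.pathVert (B.concatS x n P) n = B.pathVert x n := B.pathVert_concat x n P.1 P.2

lemma concatS_s0 (x : B.PathSpace) (n : ℕ) :
    B.concatS x n (B.ef x n (B.s0 x n)) = x := by
  unfold s0
  rw [Equiv.apply_symm_apply]
  exact B.concat_pathInit x n

lemma step_one (T : B.PathSpace ≃ B.PathSpace) (hT : B.IsVershik T)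
    (x : B.PathSpace) (n : ℕ) {N : ℕ}
    (e : Fin N ≃ { p : B.FinPath n // B.EndsAt p (B.pathVert x n) })
    (he : ∀ s t : Fin N, s < t ↔ B.finLT (e s).1 (e t).1)
    (s : Fin N) (h : s.val + 1 < N) :
    T (B.concatS x n (e s)) = B.concatS x n (e ⟨s.val + 1, h⟩) := by
  apply B.succStep T hT x n (e s).1 (e ⟨s.val + 1, h⟩).1 (e s).2 (e ⟨s.val + 1, h⟩).2
  · exact (he s ⟨s.val + 1, h⟩).1 (by simp only [Fin.lt_def]; omega)
  · intro r hr h1 h2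
    have hrt : (e ((e.symm ⟨r, hr⟩))).1 = r := by rw [Equiv.apply_symm_apply]
    have l1 := (he s (e.symm ⟨r, hr⟩)).2 (by rw [hrt]; exact h1)
    have l2 := (he (e.symm ⟨r, hr⟩) ⟨s.val + 1, h⟩).2 (by rw [hrt]; exact h2)
    simp only [Fin.lt_def] at l1 l2
    omega

lemma iter_pos (T : B.PathSpace ≃ B.PathSpace) (hT : B.IsVershik T)
    (x : B.PathSpace) (n : ℕ) {N : ℕ}
    (e : Fin N ≃ { p : B.FinPath n // B.EndsAt p (B.pathVert x n) })
    (he : ∀ s t : Fin N, s < t ↔ B.finLT (e s).1 (e t).1) :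
    ∀ (j : ℕ) (s : Fin N) (h : s.val + j < N),
      ((T : Equiv.Perm B.PathSpace) ^ j) (B.concatS x n (e s)) =
        B.concatS x n (e ⟨s.val + j, h⟩) := by
  intro j
  induction j with
  | zero =>
      intro s h
      rw [pow_zero]
      exact Equiv.Perm.one_apply _
  | succ j ih =>
      intro s h
      have h' : s.val + j < N := by omega
      rw [pow_succ', Equiv.Perm.mul_apply, ih s h']
      exact B.step_one T hT x n e he ⟨s.val + j, h'⟩ h

lemma isMaxPath_of_top (T : B.PathSpace ≃ B.PathSpace) (hT : B.IsVershik T)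
    (y : B.PathSpace)
    (hyp : ∀ L : ℕ, ∃ n : ℕ, L ≤ n ∧
      ∀ q : B.FinPath n, B.EndsAt q (B.pathVert y n) → ¬ B.finLT (B.pathInit y n) q) :
    B.IsMaxPath y := by
  by_contra hmax
  obtain ⟨⟨N₁, helt, hag⟩, -⟩ := hT.1 y hmax
  obtain ⟨n, hLn, htop⟩ := hyp (N₁ + 1)
  have hvert : B.pathVert (T y) n = B.pathVert y n := by
    unfold pathVert
    rw [← hag n (by omega)]
  refine htop (B.pathInit (T y) n) (hvert ▸ B.pathInit_endsAt (T y) n) ?_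
  exact ⟨N₁, by omega, helt, fun i hi hNi => hag i hNi⟩

lemma isMinPath_of_bot (T : B.PathSpace ≃ B.PathSpace) (hT : B.IsVershik T)
    (y : B.PathSpace)
    (hyp : ∀ L : ℕ, ∃ n : ℕ, L ≤ n ∧
      ∀ q : B.FinPath n, B.EndsAt q (B.pathVert y n) → ¬ B.finLT q (B.pathInit y n)) :
    B.IsMinPath y := by
  by_cases hz : B.IsMaxPath (T.symm y)
  · have := hT.2 _ hz
    rwa [Equiv.apply_symm_apply] at this
  obtain ⟨⟨N₁, helt, hag⟩, -⟩ := hT.1 (T.symm y) hz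
  simp only [Equiv.apply_symm_apply] at helt hag
  exfalso
  obtain ⟨n, hLn, hbot⟩ := hyp (N₁ + 1)
  have hvert : B.pathVert (T.symm y) n = B.pathVert y n := by
    unfold pathVert
    rw [hag n (by omega)]
  refine hbot (B.pathInit (T.symm y) n) (hvert ▸ B.pathInit_endsAt (T.symm y) n) ?_
  exact ⟨N₁, by omega, helt, fun i hi hNi => hag i hNi⟩

end BDiagram

/-- In a simple, properly ordered Bratteli–Vershik system, if two
distinct paths are `k`-equivalent at infinitely many levels `n > k` (`k ≥ 1`),
then they have the same `k`-coding. -/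
theorem kequiv_at_infinitely_many_levels_same_coding
    (B : BDiagram) (T : B.PathSpace ≃ B.PathSpace)
    (hproper : B.ProperlyOrdered) (hsimple : B.Simple) (hT : B.IsVershik T)
    (k : ℕ) (hk : 1 ≤ k) (x x' : B.PathSpace) (hne : x ≠ x')
    (hinf : {n : ℕ | k < n ∧ B.KEquivAt k n x x'}.Infinite) :
    B.SameCoding T k x x' := by
  classical
  have hmatch : ∀ n : ℕ, B.KEquivAt k n x x' →
      B.Nf x' n = B.Nf x n ∧ (B.s0 x' n).val = (B.s0 x n).val ∧
      ∀ (s : Fin (B.Nf x n)) (t : Fin (B.Nf x' n)), t.val = s.val →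
        ∀ (i : ℕ), i < k → ∀ (hin : i < n),
          ((B.ef x' n t).1).1 ⟨i, hin⟩ = ((B.ef x n s).1).1 ⟨i, hin⟩ := by
    intro n hke
    obtain ⟨φ, hord, hcoord, hdot⟩ := hke
    set τ : Fin (B.Nf x n) ≃ Fin (B.Nf x' n) :=
      ((B.ef x n).trans φ).trans (B.ef x' n).symm with hτdef
    have hτap : ∀ s : Fin (B.Nf x n), B.ef x' n (τ s) = φ (B.ef x n s) := by
      intro s
      rw [hτdef]
      simp only [Equiv.trans_apply, Equiv.apply_symm_apply]
    have hτ : ∀ s t : Fin (B.Nf x n), s < t ↔ τ s < τ t := by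
      intro s t
      rw [B.hef x n s t, hord (B.ef x n s) (B.ef x n t), B.hef x' n (τ s) (τ t),
        hτap s, hτap t]
    obtain ⟨hN, hval⟩ := finEquiv_val τ hτ
    have hs0 : B.s0 x' n = τ (B.s0 x n) := by
      rw [hτdef]
      simp only [Equiv.trans_apply]
      unfold BDiagram.s0
      rw [Equiv.apply_symm_apply, hdot]
    refine ⟨hN, by rw [hs0]; exact hval _, ?_⟩
    intro s t htv i hik hin
    have ht : t = τ s := by
      apply Fin.ext
      rw [htv, hval s]
    rw [ht, hτap s]
    exact hcoord (B.ef x n s) i hik hin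
  have claim1 : ∀ j : ℕ, ∃ n : ℕ, (k < n ∧ B.KEquivAt k n x x') ∧
      (B.s0 x n).val + j < B.Nf x n := by
    intro j
    by_contra hcon
    push_neg at hcon
    obtain ⟨b, hb⟩ := pigeonhole_infinite hinf
      (fun n => B.Nf x n - 1 - (B.s0 x n).val) j (by
        intro n hn
        have h1 := (B.s0 x n).isLt
        have h2 := hcon n hn
        show B.Nf x n - 1 - (B.s0 x n).val < j
        omega)
    have htopx : B.IsMaxPath (((T : Equiv.Perm B.PathSpace) ^ b) x) := by
      apply B.isMaxPath_of_top T hT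
      intro L
      obtain ⟨n, hnmem, hLn⟩ := hb.exists_gt L
      obtain ⟨⟨hkn, hke⟩, hfb⟩ := hnmem
      have hs0lt := (B.s0 x n).isLt
      have hcn := hcon n ⟨hkn, hke⟩
      have hroom : (B.s0 x n).val + b < B.Nf x n := by omega
      have hy : ((T : Equiv.Perm B.PathSpace) ^ b) x =
          B.concatS x n (B.ef x n ⟨(B.s0 x n).val + b, hroom⟩) := by
        conv_lhs => rw [← B.concatS_s0 x n]
        exact B.iter_pos T hT x n (B.ef x n) (B.hef x n) b (B.s0 x n) hroom
      refine ⟨n, by omega, ?_⟩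
      rw [hy, B.pathVert_concatS, B.pathInit_concatS]
      intro q hq hlt
      have l := (B.hef x n ⟨(B.s0 x n).val + b, hroom⟩ ((B.ef x n).symm ⟨q, hq⟩)).2
        (by rw [Equiv.apply_symm_apply]; exact hlt)
      have hlt2 := ((B.ef x n).symm ⟨q, hq⟩).isLt
      simp only [Fin.lt_def] at l
      omega
    have htopx' : B.IsMaxPath (((T : Equiv.Perm B.PathSpace) ^ b) x') := by
      apply B.isMaxPath_of_top T hT
      intro L
      obtain ⟨n, hnmem, hLn⟩ := hb.exists_gt L
      obtain ⟨⟨hkn, hke⟩, hfb⟩ := hnmem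
      obtain ⟨hN, hs0v, -⟩ := hmatch n hke
      have hs0lt := (B.s0 x n).isLt
      have hs0lt' := (B.s0 x' n).isLt
      have hcn := hcon n ⟨hkn, hke⟩
      have hroom : (B.s0 x' n).val + b < B.Nf x' n := by omega
      have hy : ((T : Equiv.Perm B.PathSpace) ^ b) x' =
          B.concatS x' n (B.ef x' n ⟨(B.s0 x' n).val + b, hroom⟩) := by
        conv_lhs => rw [← B.concatS_s0 x' n]
        exact B.iter_pos T hT x' n (B.ef x' n) (B.hef x' n) b (B.s0 x' n) hroom
      refine ⟨n, by omega, ?_⟩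
      rw [hy, B.pathVert_concatS, B.pathInit_concatS]
      intro q hq hlt
      have l := (B.hef x' n ⟨(B.s0 x' n).val + b, hroom⟩ ((B.ef x' n).symm ⟨q, hq⟩)).2
        (by rw [Equiv.apply_symm_apply]; exact hlt)
      have hlt2 := ((B.ef x' n).symm ⟨q, hq⟩).isLt
      simp only [Fin.lt_def] at l
      omega
    obtain ⟨w, -, hw⟩ := hproper.2
    have heq : ((T : Equiv.Perm B.PathSpace) ^ b) x =
        ((T : Equiv.Perm B.PathSpace) ^ b) x' := by
      rw [hw _ htopx, hw _ htopx']
    exact hne (((T : Equiv.Perm B.PathSpace) ^ b).injective heq)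
  have claim2 : ∀ j : ℕ, ∃ n : ℕ, (k < n ∧ B.KEquivAt k n x x') ∧
      j ≤ (B.s0 x n).val := by
    intro j
    by_contra hcon
    push_neg at hcon
    obtain ⟨a, ha⟩ := pigeonhole_infinite hinf (fun n => (B.s0 x n).val) j
      (fun n hn => hcon n hn)
    have hbotx : B.IsMinPath ((((T : Equiv.Perm B.PathSpace) ^ a))⁻¹ x) := by
      apply B.isMinPath_of_bot T hT
      intro L
      obtain ⟨n, hnmem, hLn⟩ := ha.exists_gt L
      obtain ⟨⟨hkn, hke⟩, hfa⟩ := hnmem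
      have hs0lt := (B.s0 x n).isLt
      have h0 : (0 : ℕ) < B.Nf x n := by omega
      have hroom : (0 : ℕ) + a < B.Nf x n := by omega
      have hx1 := B.iter_pos T hT x n (B.ef x n) (B.hef x n) a ⟨0, h0⟩ hroom
      have hidx : (⟨(0 : ℕ) + a, hroom⟩ : Fin (B.Nf x n)) = B.s0 x n := by
        apply Fin.ext
        show (0 : ℕ) + a = (B.s0 x n).val
        omega
      rw [hidx, B.concatS_s0] at hx1
      have hyx : (((T : Equiv.Perm B.PathSpace) ^ a))⁻¹ x =
          B.concatS x n (B.ef x n ⟨0, h0⟩) := by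
        have h2 := congrArg (fun z => (((T : Equiv.Perm B.PathSpace) ^ a))⁻¹ z) hx1
        simp only [Equiv.Perm.inv_def, Equiv.symm_apply_apply] at h2
        exact h2.symm
      refine ⟨n, by omega, ?_⟩
      rw [hyx, B.pathVert_concatS, B.pathInit_concatS]
      intro q hq hlt
      have l := (B.hef x n ((B.ef x n).symm ⟨q, hq⟩) ⟨0, h0⟩).2
        (by rw [Equiv.apply_symm_apply]; exact hlt)
      simp only [Fin.lt_def] at l
      omega
    have hbotx' : B.IsMinPath ((((T : Equiv.Perm B.PathSpace) ^ a))⁻¹ x') := by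
      apply B.isMinPath_of_bot T hT
      intro L
      obtain ⟨n, hnmem, hLn⟩ := ha.exists_gt L
      obtain ⟨⟨hkn, hke⟩, hfa⟩ := hnmem
      obtain ⟨hN, hs0v, -⟩ := hmatch n hke
      have hs0lt := (B.s0 x n).isLt
      have hs0lt' := (B.s0 x' n).isLt
      have h0 : (0 : ℕ) < B.Nf x' n := by omega
      have hroom : (0 : ℕ) + a < B.Nf x' n := by omega
      have hx1 := B.iter_pos T hT x' n (B.ef x' n) (B.hef x' n) a ⟨0, h0⟩ hroom
      have hidx : (⟨(0 : ℕ) + a, hroom⟩ : Fin (B.Nf x' n)) = B.s0 x' n := by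
        apply Fin.ext
        show (0 : ℕ) + a = (B.s0 x' n).val
        omega
      rw [hidx, B.concatS_s0] at hx1
      have hyx : (((T : Equiv.Perm B.PathSpace) ^ a))⁻¹ x' =
          B.concatS x' n (B.ef x' n ⟨0, h0⟩) := by
        have h2 := congrArg (fun z => (((T : Equiv.Perm B.PathSpace) ^ a))⁻¹ z) hx1
        simp only [Equiv.Perm.inv_def, Equiv.symm_apply_apply] at h2
        exact h2.symm
      refine ⟨n, by omega, ?_⟩
      rw [hyx, B.pathVert_concatS, B.pathInit_concatS]
      intro q hq hlt
      have l := (B.hef x' n ((B.ef x' n).symm ⟨q, hq⟩) ⟨0, h0⟩).2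
        (by rw [Equiv.apply_symm_apply]; exact hlt)
      simp only [Fin.lt_def] at l
      omega
    obtain ⟨w, -, hw⟩ := hproper.1
    have heq : (((T : Equiv.Perm B.PathSpace) ^ a))⁻¹ x =
        (((T : Equiv.Perm B.PathSpace) ^ a))⁻¹ x' := by
      rw [hw _ hbotx, hw _ hbotx']
    exact hne ((((T : Equiv.Perm B.PathSpace) ^ a))⁻¹.injective heq)
  intro m i hik
  unfold BDiagram.iterZ
  rcases le_or_gt 0 m with hm | hm
  · obtain ⟨j, rfl⟩ : ∃ j : ℕ, m = (j : ℤ) := ⟨m.toNat, (Int.toNat_of_nonneg hm).symm⟩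
    rw [zpow_natCast]
    obtain ⟨n, ⟨hkn, hke⟩, hroom⟩ := claim1 j
    obtain ⟨hN, hs0v, hcoords⟩ := hmatch n hke
    have hroom' : (B.s0 x' n).val + j < B.Nf x' n := by omega
    have hx : ((T : Equiv.Perm B.PathSpace) ^ j) x =
        B.concatS x n (B.ef x n ⟨(B.s0 x n).val + j, hroom⟩) := by
      conv_lhs => rw [← B.concatS_s0 x n]
      exact B.iter_pos T hT x n (B.ef x n) (B.hef x n) j (B.s0 x n) hroom
    have hx' : ((T : Equiv.Perm B.PathSpace) ^ j) x' =
        B.concatS x' n (B.ef x' n ⟨(B.s0 x' n).val + j, hroom'⟩) := by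
      conv_lhs => rw [← B.concatS_s0 x' n]
      exact B.iter_pos T hT x' n (B.ef x' n) (B.hef x' n) j (B.s0 x' n) hroom'
    have hin : i < n := by omega
    rw [hx, hx', B.concatS_apply_lt x n _ hin, B.concatS_apply_lt x' n _ hin]
    exact (hcoords ⟨(B.s0 x n).val + j, hroom⟩ ⟨(B.s0 x' n).val + j, hroom'⟩
      (show (B.s0 x' n).val + j = (B.s0 x n).val + j by omega) i hik hin).symm
  · obtain ⟨j, rfl⟩ : ∃ j : ℕ, m = -(j : ℤ) := ⟨m.natAbs, by omega⟩
    rw [zpow_neg, zpow_natCast]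
    obtain ⟨n, ⟨hkn, hke⟩, hroom⟩ := claim2 j
    obtain ⟨hN, hs0v, hcoords⟩ := hmatch n hke
    have hs0lt := (B.s0 x n).isLt
    have hs0lt' := (B.s0 x' n).isLt
    have hsub : (B.s0 x n).val - j < B.Nf x n := by omega
    have hroom2 : ((B.s0 x n).val - j) + j < B.Nf x n := by omega
    have hx1 := B.iter_pos T hT x n (B.ef x n) (B.hef x n) j
      ⟨(B.s0 x n).val - j, hsub⟩ hroom2
    have hidx : (⟨(B.s0 x n).val - j + j, hroom2⟩ : Fin (B.Nf x n)) = B.s0 x n := by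
      apply Fin.ext
      show (B.s0 x n).val - j + j = (B.s0 x n).val
      omega
    rw [hidx, B.concatS_s0] at hx1
    have hx : ((T : Equiv.Perm B.PathSpace) ^ j)⁻¹ x =
        B.concatS x n (B.ef x n ⟨(B.s0 x n).val - j, hsub⟩) := by
      have h2 := congrArg (fun z => (((T : Equiv.Perm B.PathSpace) ^ j))⁻¹ z) hx1
      simp only [Equiv.Perm.inv_def, Equiv.symm_apply_apply] at h2
      exact h2.symm
    have hsub' : (B.s0 x' n).val - j < B.Nf x' n := by omega
    have hroom2' : ((B.s0 x' n).val - j) + j < B.Nf x' n := by omega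
    have hx1' := B.iter_pos T hT x' n (B.ef x' n) (B.hef x' n) j
      ⟨(B.s0 x' n).val - j, hsub'⟩ hroom2'
    have hidx' : (⟨(B.s0 x' n).val - j + j, hroom2'⟩ : Fin (B.Nf x' n)) = B.s0 x' n := by
      apply Fin.ext
      show (B.s0 x' n).val - j + j = (B.s0 x' n).val
      omega
    rw [hidx', B.concatS_s0] at hx1'
    have hx' : ((T : Equiv.Perm B.PathSpace) ^ j)⁻¹ x' =
        B.concatS x' n (B.ef x' n ⟨(B.s0 x' n).val - j, hsub'⟩) := by
      have h2 := congrArg (fun z => (((T : Equiv.Perm B.PathSpace) ^ j))⁻¹ z) hx1'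
      simp only [Equiv.Perm.inv_def, Equiv.symm_apply_apply] at h2
      exact h2.symm
    have hin : i < n := by omega
    rw [hx, hx', B.concatS_apply_lt x n _ hin, B.concatS_apply_lt x' n _ hin]
    exact (hcoords ⟨(B.s0 x n).val - j, hsub⟩ ⟨(B.s0 x' n).val - j, hsub'⟩
      (show (B.s0 x' n).val - j = (B.s0 x n).val - j by omega) i hik hin).symm
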